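/- If S ⊂ ℤ² is a finite convex set with η-discrepancy d ≤ 0, then S contains a strictly decreasing nested chain S₁ ⊃ S₂ ⊃ … ⊃ S_{|d|+1} of weak η-generating subsets. -/

import Mathlib

open Classical

namespace Nivat

noncomputable section

/-- Embedding of `ℤ × ℤ` into `ℝ × ℝ`. -/
def e (p : ℤ × ℤ) : ℝ × ℝ := ((p.1 : ℝ), (p.2 : ℝ))

/-- A finite set `S ⊆ ℤ²` is convex if `S = conv(S) ∩ ℤ²`. -/
def IsConvexSet (S : Finset (ℤ × ℤ)) : Prop :=
  ∀ p : ℤ × ℤ, e p ∈ convexHull ℝ (e '' (S : Set (ℤ × ℤ))) → p ∈ S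

variable {A : Type*}

/-- The `η`-coloring of `S` induced by the translate by `u`. -/
def pat (η : ℤ × ℤ → A) (S : Finset (ℤ × ℤ)) (u : ℤ × ℤ) : S → A :=
  fun x => η ((x : ℤ × ℤ) + u)

/-- `P_η(S)`: number of distinct `η`-colorings of `S`. -/
def Pc (η : ℤ × ℤ → A) (S : Finset (ℤ × ℤ)) : ℕ :=
  (Set.range (pat η S)).ncard

/-- Discrepancy `D_η(S) = P_η(S) - |S|`. -/
def Dc (η : ℤ × ℤ → A) (S : Finset (ℤ × ℤ)) : ℤ :=
  (Pc η S : ℤ) - (S.card : ℤ)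

/-- Restriction of a coloring of `S` to a subset `T`. -/
def res {S T : Finset (ℤ × ℤ)} (h : T ⊆ S) (f : S → A) : T → A :=
  fun x => f ⟨(x : ℤ × ℤ), h x.2⟩

/-- A coloring `α` of `T` extends uniquely to an `η`-coloring of `S`. -/
def ExtendsUniquely (η : ℤ × ℤ → A) {T S : Finset (ℤ × ℤ)} (h : T ⊆ S) (α : T → A) : Prop :=
  ∃! β : S → A, β ∈ Set.range (pat η S) ∧ res h β = α

/-- A coloring `α` of `T` has at least two extensions to `η`-colorings of `S`. -/
def ExtendsNonUniquely (η : ℤ × ℤ → A) {T S : Finset (ℤ × ℤ)} (h : T ⊆ S) (α : T → A) : Prop :=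
  ∃ β₁ β₂ : S → A, β₁ ∈ Set.range (pat η S) ∧ β₂ ∈ Set.range (pat η S) ∧
    β₁ ≠ β₂ ∧ res h β₁ = α ∧ res h β₂ = α

theorem eraseSub (S : Finset (ℤ × ℤ)) (x : ℤ × ℤ) : S.erase x ⊆ S :=
  fun _ hy => Finset.mem_of_mem_erase hy

theorem sdiffSub (S T : Finset (ℤ × ℤ)) : S \ T ⊆ S :=
  fun _ hy => (Finset.mem_sdiff.mp hy).1

/-- `x ∈ S` is `η`-generated by `S`: every `η`-coloring of `S \ {x}`
extends uniquely to an `η`-coloring of `S`. -/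
def Generated (η : ℤ × ℤ → A) (S : Finset (ℤ × ℤ)) (x : ℤ × ℤ) : Prop :=
  ∀ α ∈ Set.range (pat η (S.erase x)), ExtendsUniquely η (eraseSub S x) α

/-- `x` is an extreme point of the convex polygon `conv(S)`. -/
def IsExtremePt (S : Finset (ℤ × ℤ)) (x : ℤ × ℤ) : Prop :=
  e x ∈ Set.extremePoints ℝ (convexHull ℝ (e '' (S : Set (ℤ × ℤ))))

/-- A weak `η`-generating set: finite, nonempty, convex, and every extreme
point is `η`-generated. -/
def WeakGenerating (η : ℤ × ℤ → A) (S : Finset (ℤ × ℤ)) : Prop :=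
  S.Nonempty ∧ IsConvexSet S ∧ ∀ x ∈ S, IsExtremePt S x → Generated η S x

/-- An `η`-generating set: weak generating and every nonempty proper convex
subset has strictly larger discrepancy. -/
def Generating (η : ℤ × ℤ → A) (S : Finset (ℤ × ℤ)) : Prop :=
  WeakGenerating η S ∧
    ∀ T ⊆ S, T ≠ S → T.Nonempty → IsConvexSet T → Dc η S < Dc η T

/-- The segment from `e p` to `e q` is a (1-dimensional exposed) boundary edge
of the convex polygon `conv(S)`. -/
def IsEdge (S : Finset (ℤ × ℤ)) (p q : ℤ × ℤ) : Prop :=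
  p ≠ q ∧ p ∈ S ∧ q ∈ S ∧ ∃ ℓ : (ℝ × ℝ) →ₗ[ℝ] ℝ, ∃ c : ℝ,
    (∀ x ∈ convexHull ℝ (e '' (S : Set (ℤ × ℤ))), ℓ x ≤ c) ∧
    {x ∈ convexHull ℝ (e '' (S : Set (ℤ × ℤ))) | ℓ x = c} = segment ℝ (e p) (e q)

/-- An edge of `S`, oriented positively (the set lies to the left of `p → q`). -/
def IsOrientedEdge (S : Finset (ℤ × ℤ)) (p q : ℤ × ℤ) : Prop :=
  IsEdge S p q ∧ ∀ x ∈ S, 0 ≤ (q.1 - p.1) * (x.2 - p.2) - (q.2 - p.2) * (x.1 - p.1)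

/-- The lattice points of `S` lying on the edge from `p` to `q`. -/
def edgePts (S : Finset (ℤ × ℤ)) (p q : ℤ × ℤ) : Finset (ℤ × ℤ) :=
  S.filter (fun x => e x ∈ segment ℝ (e p) (e q))

/-- The rectangle `R_{n,k} = [0,n) × [0,k) ∩ ℤ²`. -/
def Rect (n k : ℕ) : Finset (ℤ × ℤ) :=
  Finset.Ico (0 : ℤ) (n : ℤ) ×ˢ Finset.Ico (0 : ℤ) (k : ℤ)

/-- `η` is aperiodic: no nonzero period vector. -/
def Aperiodic (η : ℤ × ℤ → A) : Prop :=
  ∀ v : ℤ × ℤ, v ≠ 0 → ∃ x : ℤ × ℤ, η (x + v) ≠ η x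

/-- Action of a `2 × 2` integer matrix on `ℤ²`. -/
def Mv (M : Matrix (Fin 2) (Fin 2) ℤ) (p : ℤ × ℤ) : ℤ × ℤ :=
  (M 0 0 * p.1 + M 0 1 * p.2, M 1 0 * p.1 + M 1 1 * p.2)

/-- `u` and `v` are positively parallel (same direction). -/
def PosParallel (u v : ℤ × ℤ) : Prop :=
  ∃ t₁ t₂ : ℤ, 0 < t₁ ∧ 0 < t₂ ∧ t₁ • u = t₂ • v

/-- The directed rational line through the origin with direction `d` is
one-sided `η`-expansive: for some `a, b ∈ ℕ` and `A ∈ SL₂(ℤ)` taking the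
downward `y`-axis to the direction `d`, every `(η ∘ A)`-coloring of
`[0,a] × [-b,b]` extends uniquely to `[0,a] × [-b,b] ∪ {(-1,0)}`. -/
def OneSidedExpansive (η : ℤ × ℤ → A) (d : ℤ × ℤ) : Prop :=
  ∃ a b : ℕ, ∃ M : Matrix (Fin 2) (Fin 2) ℤ, M.det = 1 ∧
    PosParallel (Mv M (0, -1)) d ∧
    ∀ u v : ℤ × ℤ,
      (∀ x : ℤ × ℤ, 0 ≤ x.1 → x.1 ≤ (a : ℤ) → -(b : ℤ) ≤ x.2 → x.2 ≤ (b : ℤ) →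
        η (Mv M (x + u)) = η (Mv M (x + v))) →
      η (Mv M ((-1, 0) + u)) = η (Mv M ((-1, 0) + v))

end

end Nivat

namespace Nivat


section Aux

variable {A : Type*} [Finite A]

theorem e_inj : Function.Injective e := by
  intro p q h
  have h1 : ((p.1 : ℝ)) = q.1 := congrArg Prod.fst h
  have h2 : ((p.2 : ℝ)) = q.2 := congrArg Prod.snd h
  exact Prod.ext (by exact_mod_cast h1) (by exact_mod_cast h2)

theorem range_pat_finite (η : ℤ × ℤ → A) (S : Finset (ℤ × ℤ)) :
    (Set.range (pat η S)).Finite := Set.toFinite _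

theorem one_le_Pc (η : ℤ × ℤ → A) (S : Finset (ℤ × ℤ)) : 1 ≤ Pc η S := by
  have h : (Set.range (pat η S)).Nonempty := ⟨pat η S 0, ⟨0, rfl⟩⟩
  exact (Set.ncard_pos (range_pat_finite η S)).2 h

theorem card_pos_of_Dc (η : ℤ × ℤ → A) (S : Finset (ℤ × ℤ)) (hD : Dc η S ≤ 0) :
    0 < S.card := by
  have := one_le_Pc η S
  unfold Dc at hD
  omega

theorem range_res (η : ℤ × ℤ → A) {T S : Finset (ℤ × ℤ)} (h : T ⊆ S) :
    Set.range (pat η T) = res h '' Set.range (pat η S) := by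
  ext α
  constructor
  · rintro ⟨u, rfl⟩; exact ⟨pat η S u, ⟨u, rfl⟩, rfl⟩
  · rintro ⟨β, ⟨u, rfl⟩, rfl⟩; exact ⟨u, rfl⟩

theorem Pc_erase_of_generated (η : ℤ × ℤ → A) {S : Finset (ℤ × ℤ)} {x : ℤ × ℤ}
    (hg : Generated η S x) : Pc η (S.erase x) = Pc η S := by
  rw [Pc, range_res η (eraseSub S x),
    Set.ncard_image_of_injOn ?_]
  · rfl
  · intro β₁ hβ₁ β₂ hβ₂ hres
    obtain ⟨u, rfl⟩ := hβ₁
    have hα : res (eraseSub S x) (pat η S u) ∈ Set.range (pat η (S.erase x)) := ⟨u, rfl⟩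
    exact (hg _ hα).unique ⟨⟨u, rfl⟩, rfl⟩ ⟨hβ₂, hres.symm⟩

theorem Pc_erase_lt (η : ℤ × ℤ → A) {S : Finset (ℤ × ℤ)} {x : ℤ × ℤ}
    (hg : ¬ Generated η S x) : Pc η (S.erase x) < Pc η S := by
  unfold Generated at hg
  push_neg at hg
  obtain ⟨α, hα, hnu⟩ := hg
  obtain ⟨u, rfl⟩ := hα
  have hP : pat η S u ∈ Set.range (pat η S) ∧
      res (eraseSub S x) (pat η S u) = pat η (S.erase x) u := ⟨⟨u, rfl⟩, rfl⟩
  have h2 : ∃ β₁, (β₁ ∈ Set.range (pat η S) ∧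
      res (eraseSub S x) β₁ = pat η (S.erase x) u) ∧ β₁ ≠ pat η S u := by
    by_contra h
    push_neg at h
    exact hnu ⟨pat η S u, hP, fun y hy => h y hy⟩
  obtain ⟨β₁, ⟨hβ₁, hres₁⟩, hne⟩ := h2
  have himg : res (eraseSub S x) '' Set.range (pat η S) ⊆
      res (eraseSub S x) '' (Set.range (pat η S) \ {pat η S u}) := by
    rintro γ ⟨β, hβ, rfl⟩
    by_cases hb : β = pat η S u
    · subst hb
      exact ⟨β₁, ⟨hβ₁, hne⟩, hres₁⟩
    · exact ⟨β, ⟨hβ, hb⟩, rfl⟩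
  have hfin := range_pat_finite η S
  calc Pc η (S.erase x) = (res (eraseSub S x) '' Set.range (pat η S)).ncard := by
        rw [Pc, range_res η (eraseSub S x)]
    _ ≤ (res (eraseSub S x) '' (Set.range (pat η S) \ {pat η S u})).ncard :=
        Set.ncard_le_ncard himg (hfin.diff.image _)
    _ ≤ (Set.range (pat η S) \ {pat η S u}).ncard :=
        Set.ncard_image_le hfin.diff
    _ < Pc η S := by
        rw [Set.ncard_diff_singleton_of_mem (Set.mem_range_self u)]
        have h1 := one_le_Pc η S
        unfold Pc at h1 ⊢
        omega

theorem isConvexSet_erase {S : Finset (ℤ × ℤ)} {x : ℤ × ℤ}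
    (hS : IsConvexSet S) (hx : IsExtremePt S x) : IsConvexSet (S.erase x) := by
  intro p hp
  have hsub : (e '' ((S.erase x : Finset (ℤ × ℤ)) : Set (ℤ × ℤ))) ⊆
      convexHull ℝ (e '' (S : Set (ℤ × ℤ))) \ {e x} := by
    rintro _ ⟨q, hq, rfl⟩
    rw [Finset.coe_erase] at hq
    refine ⟨subset_convexHull ℝ _ ⟨q, hq.1, rfl⟩, ?_⟩
    simp only [Set.mem_singleton_iff]
    intro h
    exact hq.2 (e_inj h)
  have hK : convexHull ℝ (e '' ((S.erase x : Finset (ℤ × ℤ)) : Set (ℤ × ℤ))) ⊆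
      convexHull ℝ (convexHull ℝ (e '' (S : Set (ℤ × ℤ))) \ {e x}) := convexHull_mono hsub
  have hext := ((convex_convexHull ℝ (e '' (S : Set (ℤ × ℤ)))).mem_extremePoints_iff_mem_diff_convexHull_diff).1 hx
  have hpx : p ≠ x := by
    rintro rfl
    exact hext.2 (hK hp)
  have hpS : p ∈ S := by
    apply hS p
    refine convexHull_mono ?_ hp
    apply Set.image_mono
    rw [Finset.coe_erase]
    exact Set.diff_subset
  exact Finset.mem_erase.2 ⟨hpx, hpS⟩

theorem exists_extreme {S : Finset (ℤ × ℤ)} (hne : S.Nonempty) :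
    ∃ x ∈ S, IsExtremePt S x := by
  obtain ⟨z, hz⟩ := hne
  have hfin : (e '' (S : Set (ℤ × ℤ))).Finite := S.finite_toSet.image e
  have hcpt := hfin.isCompact_convexHull ℝ
  obtain ⟨y, hy⟩ := hcpt.extremePoints_nonempty
    ⟨e z, subset_convexHull ℝ _ ⟨z, hz, rfl⟩⟩
  obtain ⟨p, hpS, rfl⟩ := extremePoints_convexHull_subset hy
  exact ⟨p, hpS, hy⟩

theorem Dc_erase (η : ℤ × ℤ → A) {S : Finset (ℤ × ℤ)} {x : ℤ × ℤ}
    (hx : x ∈ S) (hg : Generated η S x) : Dc η (S.erase x) = Dc η S + 1 := by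
  unfold Dc
  rw [Pc_erase_of_generated η hg, Finset.card_erase_of_mem hx]
  have h1 : 1 ≤ S.card := Finset.card_pos.2 ⟨x, hx⟩
  rw [Nat.cast_sub h1]
  push_cast
  ring

theorem exists_min_weakgen (η : ℤ × ℤ → A) (S : Finset (ℤ × ℤ))
    (hconv : IsConvexSet S) (hne : S.Nonempty) (hD : Dc η S ≤ 0) :
    ∃ T, T ⊆ S ∧ T.Nonempty ∧ IsConvexSet T ∧ Dc η T ≤ Dc η S ∧ WeakGenerating η T := by
  classical
  set 𝒯 := S.powerset.filter (fun T => T.Nonempty ∧ IsConvexSet T) with h𝒯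
  have hS𝒯 : S ∈ 𝒯 := by
    rw [h𝒯, Finset.mem_filter, Finset.mem_powerset]
    exact ⟨le_rfl, hne, hconv⟩
  set K : ℤ := (S.card : ℤ) + 1 with hK
  obtain ⟨T, hT𝒯, hmin⟩ := Finset.exists_min_image 𝒯
    (fun T => Dc η T * K + (T.card : ℤ)) ⟨S, hS𝒯⟩
  rw [h𝒯, Finset.mem_filter, Finset.mem_powerset] at hT𝒯
  obtain ⟨hTS, hTne, hTconv⟩ := hT𝒯
  have hDle : Dc η T ≤ Dc η S := by
    have h := hmin S hS𝒯
    by_contra hc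
    push_neg at hc
    have h1 : (Dc η S + 1) * K ≤ Dc η T * K :=
      mul_le_mul_of_nonneg_right (by omega) (by positivity)
    have h3 : (0:ℤ) ≤ (T.card : ℤ) := Int.natCast_nonneg _
    nlinarith
  refine ⟨T, hTS, hTne, hTconv, hDle, hTne, hTconv, ?_⟩
  intro x hxT hxe
  by_contra hg
  by_cases hTe : T.erase x = ∅
  · -- T = {x}; then Pc T = 1 so x is generated, contradiction
    have hT1 : T = {x} := by
      apply Finset.eq_singleton_iff_unique_mem.2 ⟨hxT, ?_⟩
      intro y hy
      by_contra hyx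
      exact (Finset.ne_empty_of_mem (Finset.mem_erase.2 ⟨hyx, hy⟩)) hTe
    have hDT : Dc η T ≤ 0 := le_trans hDle hD
    have hPc : Pc η T ≤ 1 := by
      rw [hT1]
      unfold Dc at hDT
      rw [hT1, Finset.card_singleton] at hDT
      omega
    have hPc1 : Pc η T = 1 := le_antisymm hPc (one_le_Pc η T)
    obtain ⟨β, hβ⟩ := Set.ncard_eq_one.1 hPc1
    apply hg
    intro α hα
    refine ⟨β, ⟨?_, ?_⟩, ?_⟩
    · rw [hβ]; exact Set.mem_singleton _
    · funext y
      exact absurd (hTe ▸ y.2) (Finset.notMem_empty y.1)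
    · rintro γ ⟨hγ, -⟩
      rw [hβ] at hγ
      exact hγ
  · have hTne' : (T.erase x).Nonempty := Finset.nonempty_iff_ne_empty.2 hTe
    have hconv' : IsConvexSet (T.erase x) := isConvexSet_erase hTconv hxe
    have hmem : T.erase x ∈ 𝒯 := by
      rw [h𝒯, Finset.mem_filter, Finset.mem_powerset]
      exact ⟨(eraseSub T x).trans hTS, hTne', hconv'⟩
    have hlt := hmin _ hmem
    have hPlt : Pc η (T.erase x) < Pc η T := Pc_erase_lt η hg
    have hcard : (T.erase x).card = T.card - 1 := Finset.card_erase_of_mem hxT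
    have h1 : 1 ≤ T.card := Finset.card_pos.2 hTne
    have hDc : Dc η (T.erase x) ≤ Dc η T := by
      unfold Dc
      rw [hcard, Nat.cast_sub h1]
      push_cast
      omega
    have hcardlt : ((T.erase x).card : ℤ) < (T.card : ℤ) := by
      rw [hcard, Nat.cast_sub h1]; omega
    have hmul : Dc η (T.erase x) * K ≤ Dc η T * K :=
      mul_le_mul_of_nonneg_right hDc (by positivity)
    linarith

theorem chain_aux (η : ℤ × ℤ → A) : ∀ n : ℕ, ∀ S : Finset (ℤ × ℤ), S.card ≤ n →
    IsConvexSet S → ∀ k : ℕ, Dc η S ≤ -(k : ℤ) →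
    ∃ c : Fin (k + 1) → Finset (ℤ × ℤ),
      (∀ i, c i ⊆ S) ∧ (∀ i, WeakGenerating η (c i)) ∧ ∀ i j, i < j → c j ⊂ c i := by
  intro n
  induction n with
  | zero =>
    intro S hcard hconv k hDk
    have hD0 : Dc η S ≤ 0 := le_trans hDk (by omega)
    have := card_pos_of_Dc η S hD0
    omega
  | succ n ih =>
    intro S hcard hconv k hDk
    have hD0 : Dc η S ≤ 0 := le_trans hDk (by omega)
    have hne : S.Nonempty := Finset.card_pos.1 (card_pos_of_Dc η S hD0)
    obtain ⟨T, hTS, hTne, hTconv, hTD, hTwg⟩ := exists_min_weakgen η S hconv hne hD0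
    cases k with
    | zero =>
      refine ⟨fun _ => T, fun _ => hTS, fun _ => hTwg, fun i j hij => ?_⟩
      have hi := i.isLt
      have hj := j.isLt
      rw [Fin.lt_def] at hij
      omega
    | succ k' =>
      obtain ⟨x, hxT, hxe⟩ := exists_extreme hTne
      have hgen : Generated η T x := hTwg.2.2 x hxT hxe
      have hDe : Dc η (T.erase x) = Dc η T + 1 := Dc_erase η hxT hgen
      have hcard' : (T.erase x).card ≤ n := by
        have hce := Finset.card_erase_of_mem hxT
        have h2 := Finset.card_le_card hTS
        have h1 : 1 ≤ T.card := Finset.card_pos.2 hTne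
        omega
      have hDk' : Dc η (T.erase x) ≤ -(k' : ℤ) := by
        rw [hDe]
        push_cast at hDk ⊢
        omega
      obtain ⟨c', hc'sub, hc'wg, hc'chain⟩ :=
        ih (T.erase x) hcard' (isConvexSet_erase hTconv hxe) k' hDk'
      refine ⟨Fin.cases T c', ?_, ?_, ?_⟩
      · intro i
        induction i using Fin.cases with
        | zero => simpa using hTS
        | succ i =>
          simp only [Fin.cases_succ]
          exact ((hc'sub i).trans (eraseSub T x)).trans hTS
      · intro i
        induction i using Fin.cases with
        | zero => simpa using hTwg
        | succ i => simpa using hc'wg i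
      · intro i j hij
        induction j using Fin.cases with
        | zero => exact absurd hij (Fin.not_lt_zero i)
        | succ j =>
          induction i using Fin.cases with
          | zero =>
            simp only [Fin.cases_zero, Fin.cases_succ]
            exact lt_of_le_of_lt (Finset.le_iff_subset.2 (hc'sub j))
              (Finset.erase_ssubset hxT)
          | succ i =>
            simp only [Fin.cases_succ]
            exact hc'chain i j (by rwa [Fin.succ_lt_succ_iff] at hij)

end Aux

/-- If `S ⊂ ℤ²` is a finite convex set with `η`-discrepancy `d ≤ 0`, then `S`
contains a strictly decreasing nested chain `S₁ ⊃ S₂ ⊃ … ⊃ S_{|d|+1}` of weak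
`η`-generating subsets. -/
theorem statement5 {A : Type*} [Finite A] (η : ℤ × ℤ → A) (S : Finset (ℤ × ℤ))
    (hconv : IsConvexSet S) (hD : Dc η S ≤ 0) :
    ∃ c : Fin ((Dc η S).natAbs + 1) → Finset (ℤ × ℤ),
      (∀ i, c i ⊆ S) ∧ (∀ i, WeakGenerating η (c i)) ∧
      ∀ i j, i < j → c j ⊂ c i := by
  have hk : Dc η S ≤ -(((Dc η S).natAbs : ℕ) : ℤ) := by omega
  exact chain_aux η S.card S le_rfl hconv ((Dc η S).natAbs) hk

end Nivat
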